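/- For any word, any interval of positions of length ℓ contains at most 3ℓ/2 Lroots of runs. -/

import Mathlib

open List

universe u

/-- The factor `w[i..j]` of a word (inclusive positions). -/
def factor {α : Type u} (w : List α) (i j : ℕ) : List α := (w.drop i).take (j - i + 1)

/-- `p` is a period length of the word `u`. -/
def HasPeriodLen {α : Type u} (u : List α) (p : ℕ) : Prop :=
  1 ≤ p ∧ ∀ k, k + p < u.length → u[k]? = u[k + p]?

/-- The smallest period of a word. -/
noncomputable def minPeriod {α : Type u} (u : List α) : ℕ := sInf {p | HasPeriodLen u p}

/-- `[i..j]` is a run in `w`: the factor is periodic with smallest period at most half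
its length, and the periodicity extends neither to the left nor to the right. -/
def IsRun {α : Type u} (w : List α) (i j : ℕ) : Prop :=
  i < j ∧ j < w.length ∧
  2 * minPeriod (factor w i j) ≤ j - i + 1 ∧
  (0 < i → minPeriod (factor w i j) < minPeriod (factor w (i - 1) j)) ∧
  (j + 1 < w.length → minPeriod (factor w i j) < minPeriod (factor w i (j + 1)))
/-- `listPow u n` is the `n`-th power `u^n` of the word `u`. -/
def listPow {α : Type u} (v : List α) : ℕ → List α
  | 0 => []
  | n + 1 => v ++ listPow v n

/-- A word is primitive if it is not a proper power. -/
def Primitive {α : Type u} (v : List α) : Prop :=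
  v ≠ [] ∧ ∀ r n, 2 ≤ n → v ≠ listPow r n

/-- `c` is a conjugate (rotation) of `v`. -/
def IsConjWord {α : Type u} (v c : List α) : Prop := ∃ s t, v = s ++ t ∧ c = t ++ s
/-- `u` is a Lyndon word for the alphabet order `r`: nonempty and lexicographically
smaller than each of its proper nonempty suffixes. -/
def IsLyndonWrt {α : Type u} (r : α → α → Prop) (v : List α) : Prop :=
  v ≠ [] ∧ ∀ t, t <:+ v → t ≠ v → t ≠ [] → List.Lex r v t

/-- The run `[i..j]` in `w` is governed by the order `r`: either the run ends the word,
or the letter following the run is `r`-smaller than the letter one period before it. -/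
noncomputable def UseOrd {α : Type u} (r : α → α → Prop) (w : List α) (i j : ℕ) : Prop :=
  j + 1 = w.length ∨
    ∃ a b, w[j + 1]? = some a ∧ w[j + 1 - minPeriod (factor w i j)]? = some b ∧ r a b

/-- `v` is the Lyndon root (w.r.t. the order `r`) of the run `[i..j]` of `w`:
the Lyndon conjugate of its root. -/
def LyndonRootOf {α : Type u} (r : α → α → Prop) (w : List α) (i j : ℕ) (v : List α) : Prop :=
  IsLyndonWrt r v ∧ IsConjWord (factor w i (i + minPeriod (factor w i j) - 1)) v

/-- `[a..b]` is the Lroot of the run `[i..j]` of `w`: the interval of the first occurrence,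
inside the run, of the Lyndon root of the run, taken with respect to the lexicographic order
determined by the letter following the run. -/
noncomputable def IsLroot {α : Type u} [LinearOrder α] (w : List α) (i j a b : ℕ) : Prop :=
  IsRun w i j ∧
  ∃ v, ((UseOrd (· < ·) w i j ∧ LyndonRootOf (· < ·) w i j v) ∨
        (¬ UseOrd (· < ·) w i j ∧ LyndonRootOf (· > ·) w i j v)) ∧
    i ≤ a ∧ b ≤ j ∧ b + 1 = a + v.length ∧ factor w a b = v ∧
    ∀ a', i ≤ a' → a' < a → factor w a' (a' + v.length - 1) ≠ v

section Aux

variable {α : Type u}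

lemma factor_length (w : List α) (i j : ℕ) :
    (factor w i j).length = min (j - i + 1) (w.length - i) := by
  simp [factor]

lemma factor_getElem? (w : List α) (i j k : ℕ) (hk : k < j - i + 1) :
    (factor w i j)[k]? = w[i + k]? := by
  simp [factor, List.getElem?_take, hk, List.getElem?_drop]

lemma hasPeriodLen_succ_len (u : List α) : HasPeriodLen u (u.length + 1) :=
  ⟨by omega, fun k hk => by omega⟩

lemma minPeriod_hasPeriod (u : List α) : HasPeriodLen u (minPeriod u) := by
  have : minPeriod u ∈ {p | HasPeriodLen u p} :=
    Nat.sInf_mem ⟨u.length + 1, Set.mem_setOf_eq ▸ hasPeriodLen_succ_len u⟩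
  exact this

lemma minPeriod_le {u : List α} {p : ℕ} (h : HasPeriodLen u p) : minPeriod u ≤ p :=
  Nat.sInf_le h

lemma one_le_minPeriod (u : List α) : 1 ≤ minPeriod u := (minPeriod_hasPeriod u).1

/-- A list is never `Lex`-greater than one of its prefixes (for irreflexive `r`). -/
lemma not_lex_prefix {r : α → α → Prop} (hirr : ∀ x : α, ¬ r x x) :
    ∀ {t v : List α}, t <+: v → ¬ List.Lex r v t := by
  intro t
  induction t with
  | nil => intro v _ h; cases h
  | cons x t' ih =>
    intro v hpre hlex
    obtain ⟨rest, hrest⟩ := hpre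
    subst hrest
    cases hlex with
    | rel h => exact hirr x h
    | cons h => exact ih ⟨rest, rfl⟩ h

/-- If `v` and `u` agree before position `m`, and at position `m` the letter of `u`
is `r`-below that of `v`, then `v` is not `Lex r`-below `u`. -/
lemma not_lex_of_firstdiff {r : α → α → Prop} (hirr : ∀ x : α, ¬ r x x)
    (hasym : ∀ x y : α, r x y → ¬ r y x) :
    ∀ (m : ℕ) {v u : List α} {x y : α},
      (∀ t, t < m → v[t]? = u[t]?) → v[m]? = some x → u[m]? = some y → r y x →
      ¬ List.Lex r v u := by
  intro m
  induction m with
  | zero =>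
    intro v u x y _ hv hu hr hlex
    match v, u, hlex with
    | _ :: v', _ :: u', List.Lex.rel h =>
      simp only [getElem?_cons_zero, Option.some.injEq] at hv hu
      subst hv; subst hu; exact hasym _ _ h hr
    | _ :: v', _ :: u', List.Lex.cons h =>
      simp only [getElem?_cons_zero, Option.some.injEq] at hv hu
      subst hv; subst hu; exact hirr _ hr
  | succ m ih =>
    intro v u x y hagree hv hu hr hlex
    match v, u, hlex with
    | _ :: v', _ :: u', List.Lex.rel h =>
      have h0 := hagree 0 (Nat.succ_pos m)
      simp only [getElem?_cons_zero, Option.some.injEq] at h0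
      subst h0; exact hirr _ h
    | _ :: v', _ :: u', List.Lex.cons h =>
      simp only [getElem?_cons_succ] at hv hu
      exact ih (fun t ht => by
        have := hagree (t+1) (by omega)
        simpa using this) hv hu hr h

/-- head-minimality of Lyndon words -/
lemma lyndon_head_min {r : α → α → Prop} (hirr : ∀ x : α, ¬ r x x)
    (hasym : ∀ x y : α, r x y → ¬ r y x)
    {v : List α} (hL : IsLyndonWrt r v) {m : ℕ} (hm : 1 ≤ m) (hmv : m < v.length)
    {c0 cm : α} (h0 : v[0]? = some c0) (hm' : v[m]? = some cm) : ¬ r cm c0 := by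
  intro hcon
  have hsuf : v.drop m <:+ v := drop_suffix m v
  have hne : v.drop m ≠ v := by
    intro h
    have := congrArg List.length h
    simp at this
    omega
  have hnil : v.drop m ≠ [] := by
    intro h
    have := congrArg List.length h
    simp at this
    omega
  have hlex := hL.2 _ hsuf hne hnil
  have ht0 : (v.drop m)[0]? = some cm := by
    rw [List.getElem?_drop]; simpa using hm'
  match v, v.drop m, hlex, h0, ht0 with
  | _ :: _, _ :: _, List.Lex.rel h, h0, ht0 =>
    simp only [getElem?_cons_zero, Option.some.injEq] at h0 ht0
    subst h0; subst ht0; exact hasym _ _ h hcon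
  | _ :: _, _ :: _, List.Lex.cons h, h0, ht0 =>
    simp only [getElem?_cons_zero, Option.some.injEq] at h0 ht0
    subst h0; subst ht0; exact hirr _ hcon

/-- A Lyndon word of length ≥ 2 is not constant. -/
lemma lyndon_not_const {r : α → α → Prop} (hirr : ∀ x : α, ¬ r x x)
    {v : List α} (hL : IsLyndonWrt r v)
    (h2 : 2 ≤ v.length) : ∃ m, 1 ≤ m ∧ m < v.length ∧ v[m]? ≠ v[0]? := by
  by_contra hcon
  push_neg at hcon
  have hconst : ∀ m, m < v.length → v[m]? = v[0]? := by
    intro m hm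
    rcases Nat.eq_zero_or_pos m with h | h
    · subst h; rfl
    · exact hcon m h hm
  have hpre : v.drop 1 <+: v := by
    have : v.drop 1 = v.take (v.length - 1) := by
      apply List.ext_getElem?
      intro n
      rw [List.getElem?_drop, List.getElem?_take]
      by_cases hn : n < v.length - 1
      · simp only [hn, if_pos]
        rw [hconst (1+n) (by omega), hconst n (by omega)]
      · rw [if_neg hn, List.getElem?_eq_none (by omega)]
    rw [this]; exact take_prefix _ _
  have hne : v.drop 1 ≠ v := by
    intro h; have := congrArg List.length h; simp at this; omega
  have hnil : v.drop 1 ≠ [] := by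
    intro h; have := congrArg List.length h; simp at this; omega
  exact not_lex_prefix hirr hpre (hL.2 _ (drop_suffix 1 v) hne hnil)

lemma run_p_le {w : List α} {i j : ℕ} (h : IsRun w i j) :
    minPeriod (factor w i j) ≤ j - i := by
  have h1 := one_le_minPeriod (factor w i j)
  have h2 := h.2.2.1
  omega

lemma run_period {w : List α} {i j : ℕ} (h : IsRun w i j) {k : ℕ}
    (hk1 : i ≤ k) (hk2 : k + minPeriod (factor w i j) ≤ j) :
    w[k]? = w[k + minPeriod (factor w i j)]? := by
  set p := minPeriod (factor w i j) with hp
  have hlen : (factor w i j).length = j - i + 1 := by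
    rw [factor_length]; have := h.1; have := h.2.1; omega
  have hper := (minPeriod_hasPeriod (factor w i j)).2 (k - i) (by omega)
  rw [factor_getElem? w i j (k-i) (by omega), factor_getElem? w i j (k-i+p) (by omega)] at hper
  have e1 : i + (k - i) = k := by omega
  have e2 : i + (k - i + p) = k + p := by omega
  rwa [e1, e2] at hper

/-- periodicity does not extend to the left -/
lemma ext_left_period {w : List α} {i j : ℕ} (h : IsRun w i j) (hi : 0 < i)
    (h0 : w[i - 1]? = w[i - 1 + minPeriod (factor w i j)]?) : False := by
  set p := minPeriod (factor w i j) with hp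
  have hmax := h.2.2.2.1 hi
  have hple := run_p_le h
  have hp1 := one_le_minPeriod (factor w i j)
  have : HasPeriodLen (factor w (i-1) j) p := by
    constructor
    · omega
    · intro k hk
      have hlen : (factor w (i-1) j).length = j - (i-1) + 1 := by
        rw [factor_length]; have := h.1; have := h.2.1; omega
      rw [hlen] at hk
      rw [factor_getElem? w (i-1) j k (by omega), factor_getElem? w (i-1) j (k+p) (by omega)]
      rcases Nat.eq_zero_or_pos k with h' | h'
      · subst h'; simpa using h0
      · have e1 : i - 1 + (k + p) = (i - 1 + k) + p := by omega
        rw [e1, hp]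
        exact run_period h (k := i - 1 + k) (by omega) (by omega)
  exact absurd (minPeriod_le this) (by omega)

/-- periodicity does not extend to the right -/
lemma ext_right_period {w : List α} {i j : ℕ} (h : IsRun w i j) (hj : j + 1 < w.length)
    (h0 : w[j + 1 - minPeriod (factor w i j)]? = w[j + 1]?) : False := by
  set p := minPeriod (factor w i j) with hp
  have hmax := h.2.2.2.2 hj
  have hple := run_p_le h
  have hp1 := one_le_minPeriod (factor w i j)
  have hij := h.1
  have : HasPeriodLen (factor w i (j+1)) p := by
    constructor
    · omega
    · intro k hk
      have hlen : (factor w i (j+1)).length = j + 1 - i + 1 := by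
        rw [factor_length]; omega
      rw [hlen] at hk
      rw [factor_getElem? w i (j+1) k (by omega), factor_getElem? w i (j+1) (k+p) (by omega)]
      rcases Nat.lt_or_ge (i + k + p) (j + 1) with h' | h'
      · have e1 : i + (k + p) = (i + k) + p := by omega
        rw [e1, hp]
        exact run_period h (k := i + k) (by omega) (by omega)
      · have e1 : i + k = j + 1 - p := by omega
        have e2 : i + (k + p) = j + 1 := by omega
        rw [e1, e2]
        exact h0
  exact absurd (minPeriod_le this) (by omega)

/-- letters mismatch just after the run -/
lemma run_break_right {w : List α} {i j : ℕ} (h : IsRun w i j) (hj : j + 1 < w.length) :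
    w[j + 1]? ≠ w[j + 1 - minPeriod (factor w i j)]? := fun hc =>
  ext_right_period h hj hc.symm

end Aux
section Core

variable {α : Type u} [LinearOrder α]

omit [LinearOrder α] in
lemma conj_length {v c : List α} (h : IsConjWord v c) : c.length = v.length := by
  obtain ⟨s, t, h1, h2⟩ := h
  subst h1; subst h2; simp; omega

/-- packaged data of an Lroot -/
lemma lroot_spec {w : List α} {i j a b : ℕ} (hL : IsLroot w i j a b) :
    i ≤ a ∧ b ≤ j ∧ b + 1 = a + minPeriod (factor w i j) ∧
    ∃ v : List α, v.length = minPeriod (factor w i j) ∧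
      (∀ m, m < v.length → v[m]? = w[a + m]?) ∧
      ((UseOrd (· < ·) w i j ∧ IsLyndonWrt (· < ·) v) ∨
        (¬ UseOrd (· < ·) w i j ∧ IsLyndonWrt (· > ·) v)) ∧
      (∀ a', i ≤ a' → a' < a → factor w a' (a' + v.length - 1) ≠ v) := by
  obtain ⟨hrun, v, hbr, hia, hbj, hblen, hfac, hmin⟩ := hL
  have hple := run_p_le hrun
  have hp1 := one_le_minPeriod (factor w i j)
  have hjlen := hrun.2.1
  have hij := hrun.1
  have hconj : IsConjWord (factor w i (i + minPeriod (factor w i j) - 1)) v := by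
    rcases hbr with ⟨_, _, h⟩ | ⟨_, _, h⟩ <;> exact h
  have hvlen : v.length = minPeriod (factor w i j) := by
    rw [conj_length hconj, factor_length]
    omega
  refine ⟨hia, hbj, by omega, v, hvlen, ?_, ?_, hmin⟩
  · intro m hm
    rw [← hfac, factor_getElem? w a b m (by omega)]
  · rcases hbr with ⟨h1, h2⟩ | ⟨h1, h2⟩
    · exact Or.inl ⟨h1, h2.1⟩
    · exact Or.inr ⟨h1, h2.1⟩

/-- nesting of runs with the same minimal period around a common window -/
lemma run_nest {w : List α} {i1 j1 i2 j2 a b : ℕ}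
    (hr1 : IsRun w i1 j1) (hr2 : IsRun w i2 j2)
    (hp : minPeriod (factor w i1 j1) = minPeriod (factor w i2 j2))
    (ha1 : i1 ≤ a) (hb1 : b ≤ j1) (hab : b + 1 = a + minPeriod (factor w i1 j1))
    (ha2 : i2 ≤ a) (hb2 : b ≤ j2) : i1 ≤ i2 ∧ j2 ≤ j1 := by
  have hp1 := one_le_minPeriod (factor w i1 j1)
  have hple1 := run_p_le hr1
  have hple2 := run_p_le hr2
  have hlen2 := hr2.2.1
  constructor
  · by_contra hcon
    push_neg at hcon
    apply ext_left_period hr1 (by omega)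
    rw [hp]
    exact run_period hr2 (k := i1 - 1) (by omega) (by omega)
  · by_contra hcon
    push_neg at hcon
    have := run_period hr2 (k := j1 + 1 - minPeriod (factor w i1 j1)) (by omega) (by omega)
    have e : j1 + 1 - minPeriod (factor w i1 j1) + minPeriod (factor w i2 j2) = j1 + 1 := by
      omega
    rw [e] at this
    exact ext_right_period hr1 (by omega) this

/-- Lroots occupying the same interval come from the same run. -/
lemma lroot_interval_inj {w : List α} {i1 j1 i2 j2 a b : ℕ}
    (h1 : IsLroot w i1 j1 a b) (h2 : IsLroot w i2 j2 a b) : i1 = i2 ∧ j1 = j2 := by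
  obtain ⟨hia1, hbj1, hab1, -⟩ := lroot_spec h1
  obtain ⟨hia2, hbj2, hab2, -⟩ := lroot_spec h2
  have hp : minPeriod (factor w i1 j1) = minPeriod (factor w i2 j2) := by omega
  have n1 := run_nest h1.1 h2.1 hp hia1 hbj1 hab1 hia2 hbj2
  have n2 := run_nest h2.1 h1.1 hp.symm hia2 hbj2 (by omega) hia1 hbj1
  omega

end Core
section Core2

set_option linter.unusedSectionVars false

variable {α : Type u} [LinearOrder α]

omit [LinearOrder α] in
/-- Two Lroots with the same governing order cannot start at the same position
(asymmetric core). -/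
lemma key_case {r : α → α → Prop} (hirr : ∀ x : α, ¬ r x x)
    (hasym : ∀ x y : α, r x y → ¬ r y x)
    {w : List α} {i1 j1 a b1 : ℕ} (hr1 : IsRun w i1 j1)
    (ha1 : i1 ≤ a) (hb1j : b1 ≤ j1) (hab1 : b1 + 1 = a + minPeriod (factor w i1 j1))
    (hbreak : ∀ x y : α, j1 + 1 < w.length → w[j1 + 1]? = some x →
      w[j1 + 1 - minPeriod (factor w i1 j1)]? = some y → r x y)
    {v2 : List α} {p2 : ℕ} (hl2 : IsLyndonWrt r v2) (hlen2 : v2.length = p2)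
    (hv2 : ∀ m, m < p2 → v2[m]? = w[a + m]?)
    (hp12 : minPeriod (factor w i1 j1) < p2) (hout : a + p2 - 1 < w.length) : False := by
  set p1 := minPeriod (factor w i1 j1) with hp1def
  have hp11 : 1 ≤ p1 := one_le_minPeriod _
  have hu_get : ∀ k : ℕ, (v2.drop p1)[k]? = v2[p1 + k]? := fun k => List.getElem?_drop
  have hu_len : (v2.drop p1).length = p2 - p1 := by simp [hlen2]
  have hune : v2.drop p1 ≠ v2 := by
    intro h; have := congrArg List.length h; rw [hu_len, hlen2] at this; omega
  have hunil : v2.drop p1 ≠ [] := by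
    intro h; have := congrArg List.length h; rw [hu_len] at this; simp at this; omega
  have hlex := hl2.2 _ (drop_suffix p1 v2) hune hunil
  by_cases hcase : a + p2 - 1 ≤ j1
  · -- the long root lies inside the short run: it would be bordered
    have heq : v2.drop p1 = v2.take (p2 - p1) := by
      apply List.ext_getElem?
      intro n
      rw [hu_get n, List.getElem?_take]
      by_cases hn : n < p2 - p1
      · rw [if_pos hn, hv2 (p1+n) (by omega), hv2 n (by omega)]
        have e : a + (p1 + n) = (a + n) + p1 := by omega
        rw [e, hp1def]
        exact (run_period hr1 (k := a + n) (by omega) (by omega)).symm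
      · rw [if_neg hn, List.getElem?_eq_none (by omega)]
    exact not_lex_prefix hirr (heq ▸ take_prefix (p2 - p1) v2) hlex
  · -- the long root sees the mismatch ending the short run
    push_neg at hcase
    have hj1len : j1 + 1 < w.length := by omega
    have hx : w[j1+1]? = some (w[j1+1]'hj1len) := List.getElem?_eq_getElem hj1len
    have hylen : j1 + 1 - p1 < w.length := by omega
    have hy : w[j1+1-p1]? = some (w[j1+1-p1]'hylen) := List.getElem?_eq_getElem hylen
    have hrel := hbreak _ _ hj1len hx hy
    have htlt : j1 + 1 - (a + p1) < p2 - p1 := by omega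
    apply not_lex_of_firstdiff hirr hasym (j1 + 1 - (a + p1))
      (v := v2) (u := v2.drop p1) ?_ ?_ ?_ hrel hlex
    · -- agreement before the mismatch
      intro t ht
      rw [hu_get t, hv2 t (by omega), hv2 (p1 + t) (by omega)]
      have e : a + (p1 + t) = (a + t) + p1 := by omega
      rw [e, hp1def]
      exact run_period hr1 (k := a + t) (by omega) (by omega)
    · rw [hv2 _ (by omega)]
      have e : a + (j1 + 1 - (a + p1)) = j1 + 1 - p1 := by omega
      rw [e]; exact hy
    · rw [hu_get, hv2 _ (by omega)]
      have e : a + (p1 + (j1 + 1 - (a + p1))) = j1 + 1 := by omega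
      rw [e]; exact hx

/-- Two Lroots with the same governing order starting at the same position:
shorter-first version leads to a contradiction. -/
lemma lroot_key {w : List α} {i1 j1 i2 j2 a b1 b2 : ℕ}
    (h1 : IsLroot w i1 j1 a b1) (h2 : IsLroot w i2 j2 a b2)
    (huse : UseOrd (· < ·) w i1 j1 ↔ UseOrd (· < ·) w i2 j2) (hb : b1 < b2) : False := by
  obtain ⟨hia1, hbj1, hab1, v1, hvlen1, hv1, hbr1, -⟩ := lroot_spec h1
  obtain ⟨hia2, hbj2, hab2, v2, hvlen2, hv2, hbr2, -⟩ := lroot_spec h2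
  have hj2len := h2.1.2.1
  have hp12 : minPeriod (factor w i1 j1) < b2 + 1 - a := by omega
  have hout : a + (b2 + 1 - a) - 1 < w.length := by omega
  have hvlen2' : v2.length = b2 + 1 - a := by omega
  have hv2' : ∀ m, m < b2 + 1 - a → v2[m]? = w[a+m]? := fun m hm => hv2 m (by omega)
  rcases hbr1 with ⟨hord1, hly1⟩ | ⟨hord1, hly1⟩
  · -- both runs governed by <
    have hly2 : IsLyndonWrt (· < ·) v2 := by
      rcases hbr2 with ⟨_, h⟩ | ⟨hn, _⟩
      · exact h
      · exact absurd (huse.mp hord1) hn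
    refine key_case (r := (· < ·)) (fun x => lt_irrefl x) (fun x y h h' => absurd h' (not_lt.mpr h.le))
      h1.1 hia1 hbj1 hab1 ?_ hly2 hvlen2' hv2' hp12 hout
    intro x y hjl hx hy
    rcases hord1 with heq | ⟨x', y', hx', hy', hlt⟩
    · omega
    · rw [hx'] at hx; rw [hy'] at hy
      simp only [Option.some.injEq] at hx hy
      rw [← hx, ← hy]; exact hlt
  · -- both runs governed by >
    have hly2 : IsLyndonWrt (· > ·) v2 := by
      rcases hbr2 with ⟨h, _⟩ | ⟨_, h⟩
      · exact absurd (huse.mpr h) hord1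
      · exact h
    refine key_case (r := (· > ·)) (fun x => lt_irrefl x) (fun x y h h' => absurd h' (not_lt.mpr h.le))
      h1.1 hia1 hbj1 hab1 ?_ hly2 hvlen2' hv2' hp12 hout
    intro x y hjl hx hy
    have hne := run_break_right h1.1 hjl
    rw [hx, hy] at hne
    have hnlt : ¬ x < y := fun hlt => hord1 (Or.inr ⟨x, y, hx, hy, hlt⟩)
    have hxy : x ≠ y := fun h => hne (by rw [h])
    exact lt_of_le_of_ne (le_of_not_gt hnlt) (Ne.symm hxy)

/-- Two Lroots with the same governing order starting at the same position
come from the same run. -/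
lemma lroot_same_start {w : List α} {i1 j1 i2 j2 a b1 b2 : ℕ}
    (h1 : IsLroot w i1 j1 a b1) (h2 : IsLroot w i2 j2 a b2)
    (huse : UseOrd (· < ·) w i1 j1 ↔ UseOrd (· < ·) w i2 j2) : i1 = i2 ∧ j1 = j2 := by
  rcases lt_trichotomy b1 b2 with h | h | h
  · exact (lroot_key h1 h2 huse h).elim
  · subst h; exact lroot_interval_inj h1 h2
  · exact (lroot_key h2 h1 huse.symm h).elim

end Core2
section Core3

set_option linter.unusedSectionVars false

variable {α : Type u} [LinearOrder α]

lemma run_const_letter {w : List α} {i j : ℕ} (h : IsRun w i j)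
    (hp : minPeriod (factor w i j) = 1) :
    ∀ d, i + d ≤ j → w[i + d]? = w[i]? := by
  intro d
  induction d with
  | zero => intro _; rfl
  | succ d ih =>
    intro hd
    have := run_period h (k := i + d) (by omega) (by omega)
    rw [hp] at this
    rw [show i + (d+1) = i + d + 1 from by omega, ← this]
    exact ih (by omega)

/-- The two Lroots of a mixed-order collision: the shorter one has length 1,
and the collision happens at the start of a maximal constant block. -/
lemma coll_struct_aux {w : List α} {i1 j1 i2 j2 a b1 b2 : ℕ}
    (h1 : IsLroot w i1 j1 a b1) (h2 : IsLroot w i2 j2 a b2) (hb : b1 < b2) :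
    a + 1 < w.length ∧ w[a]? = w[a + 1]? ∧ (0 < a → w[a - 1]? ≠ w[a]?) := by
  by_cases huse : UseOrd (· < ·) w i1 j1 ↔ UseOrd (· < ·) w i2 j2
  · exact (lroot_key h1 h2 huse hb).elim
  obtain ⟨hia1, hbj1, hab1, v1, hvlen1, hv1, hbr1, hmin1⟩ := lroot_spec h1
  obtain ⟨hia2, hbj2, hab2, v2, hvlen2, hv2, hbr2, -⟩ := lroot_spec h2
  have hj1len := h1.1.2.1
  have hj2len := h2.1.2.1
  have hij1 := h1.1.1
  have halen : a < w.length := by omega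
  -- the two Lyndon roots have opposite orders
  have hlys : (IsLyndonWrt (· < ·) v1 ∧ IsLyndonWrt (· > ·) v2) ∨
      (IsLyndonWrt (· > ·) v1 ∧ IsLyndonWrt (· < ·) v2) := by
    rcases hbr1 with ⟨ho1, hl1⟩ | ⟨ho1, hl1⟩ <;> rcases hbr2 with ⟨ho2, hl2⟩ | ⟨ho2, hl2⟩
    · exact absurd ⟨fun _ => ho2, fun _ => ho1⟩ huse
    · exact Or.inl ⟨hl1, hl2⟩
    · exact Or.inr ⟨hl1, hl2⟩
    · exact absurd ⟨fun h => absurd h ho1, fun h => absurd h ho2⟩ huse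
  -- the shorter root has length 1
  have hp1 : minPeriod (factor w i1 j1) = 1 := by
    by_contra hne
    have hp11 := one_le_minPeriod (factor w i1 j1)
    have h2p : 2 ≤ v1.length := by omega
    have hirrlt : ∀ x : α, ¬ x < x := fun x => lt_irrefl x
    have hirrgt : ∀ x : α, ¬ x > x := fun x => lt_irrefl x
    have hasymlt : ∀ x y : α, x < y → ¬ y < x := fun x y h h' => absurd h' (not_lt.mpr h.le)
    have hasymgt : ∀ x y : α, x > y → ¬ y > x := fun x y h h' => absurd h' (not_lt.mpr h.le)
    have hm : ∃ m, 1 ≤ m ∧ m < v1.length ∧ v1[m]? ≠ v1[0]? := by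
      rcases hlys with ⟨hl1, _⟩ | ⟨hl1, _⟩
      · exact lyndon_not_const hirrlt hl1 h2p
      · exact lyndon_not_const hirrgt hl1 h2p
    obtain ⟨m, hm1, hm2, hm3⟩ := hm
    have hamlen : a + m < w.length := by omega
    have hc0 : w[a]? = some (w[a]'halen) := List.getElem?_eq_getElem halen
    have hcm : w[a+m]? = some (w[a+m]'hamlen) := List.getElem?_eq_getElem hamlen
    have hv10 : v1[0]? = some (w[a]'halen) := by rw [hv1 0 (by omega)]; simpa using hc0
    have hv1m : v1[m]? = some (w[a+m]'hamlen) := by rw [hv1 m (by omega)]; exact hcm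
    have hv20 : v2[0]? = some (w[a]'halen) := by rw [hv2 0 (by omega)]; simpa using hc0
    have hv2m : v2[m]? = some (w[a+m]'hamlen) := by rw [hv2 m (by omega)]; exact hcm
    have hmv2 : m < v2.length := by omega
    have heq : (w[a+m]'hamlen) = (w[a]'halen) := by
      rcases hlys with ⟨hl1, hl2⟩ | ⟨hl1, hl2⟩
      · have k1 := lyndon_head_min hirrlt hasymlt hl1 hm1 hm2 hv10 hv1m
        have k2 := lyndon_head_min hirrgt hasymgt hl2 hm1 hmv2 hv20 hv2m
        exact le_antisymm (not_lt.mp k2) (not_lt.mp k1)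
      · have k1 := lyndon_head_min hirrgt hasymgt hl1 hm1 hm2 hv10 hv1m
        have k2 := lyndon_head_min hirrlt hasymlt hl2 hm1 hmv2 hv20 hv2m
        exact le_antisymm (not_lt.mp k1) (not_lt.mp k2)
    exact hm3 (by rw [hv1m, hv10, heq])
  -- hence b1 = a and the Lroot starts at i1
  have hb1a : b1 = a := by omega
  have hv1len1 : v1.length = 1 := by omega
  have hai1 : a = i1 := by
    by_contra hne
    have hia : i1 < a := by omega
    apply hmin1 i1 le_rfl hia
    apply List.ext_getElem?
    intro n
    rcases Nat.eq_zero_or_pos n with h0 | h0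
    · subst h0
      rw [factor_getElem? w i1 (i1 + v1.length - 1) 0 (by omega), hv1 0 (by omega)]
      have := run_const_letter h1.1 hp1 (a - i1) (by omega)
      rw [show i1 + (a - i1) = a + 0 from by omega] at this
      rw [show i1 + 0 = i1 from rfl]
      exact this.symm
    · rw [List.getElem?_eq_none, List.getElem?_eq_none (by omega)]
      rw [factor_length]
      have := h1.1.2.1
      omega
  refine ⟨by omega, ?_, ?_⟩
  · have := run_period h1.1 (k := a) (by omega) (by rw [hp1]; omega)
    rwa [hp1] at this
  · intro ha0 hcon
    apply ext_left_period h1.1 (i := i1) (by omega)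
    rw [hp1, show i1 - 1 + 1 = a from by omega, show i1 - 1 = a - 1 from by omega]
    exact hcon

/-- Any collision of two distinct runs' Lroots at a common start `a` happens at the
start of a maximal constant block of length ≥ 2. -/
lemma coll_struct {w : List α} {i1 j1 i2 j2 a b1 b2 : ℕ}
    (h1 : IsLroot w i1 j1 a b1) (h2 : IsLroot w i2 j2 a b2)
    (hne : ¬ (i1 = i2 ∧ j1 = j2)) :
    a + 1 < w.length ∧ w[a]? = w[a + 1]? ∧ (0 < a → w[a - 1]? ≠ w[a]?) := by
  rcases lt_trichotomy b1 b2 with h | h | h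
  · exact coll_struct_aux h1 h2 h
  · subst h; exact (hne (lroot_interval_inj h1 h2)).elim
  · exact coll_struct_aux h2 h1 h

end Core3
/-- Any interval of positions of length `ℓ` contains at most `3ℓ/2` Lroots of runs. -/
theorem lroots_in_interval_le {α : Type u} [LinearOrder α] (w : List α) (s ℓ : ℕ) :
    2 * {ij : ℕ × ℕ | ∃ a b, IsLroot w ij.1 ij.2 a b ∧ s ≤ a ∧ b < s + ℓ}.ncard ≤
      3 * ℓ := by
  classical
  set S := {ij : ℕ × ℕ | ∃ a b, IsLroot w ij.1 ij.2 a b ∧ s ≤ a ∧ b < s + ℓ} with hS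
  have hfin : S.Finite := by
    apply Set.Finite.subset (Set.finite_Icc ((0,0) : ℕ × ℕ) (w.length, w.length))
    rintro ⟨i, j⟩ ⟨a, b, hL, -, -⟩
    have h1 := hL.1.1
    have h2 := hL.1.2.1
    simp only [Set.mem_Icc, Prod.le_def]
    omega
  rw [Set.ncard_eq_toFinset_card _ hfin]
  set F := hfin.toFinset with hF
  have hmem : ∀ ij : ℕ × ℕ, ij ∈ F →
      ∃ ab : ℕ × ℕ, IsLroot w ij.1 ij.2 ab.1 ab.2 ∧ s ≤ ab.1 ∧ ab.2 < s + ℓ := by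
    intro ij hij
    rw [hF, Set.Finite.mem_toFinset] at hij
    obtain ⟨a, b, h⟩ := hij
    exact ⟨(a, b), h⟩
  choose! g hg1 hg2 hg3 using hmem
  have hgab : ∀ ij ∈ F, (g ij).1 ≤ (g ij).2 := by
    intro ij hij
    obtain ⟨-, -, h, -⟩ := lroot_spec (hg1 ij hij)
    have := one_le_minPeriod (factor w ij.1 ij.2)
    omega
  have hmapsto : ∀ ij ∈ F, (g ij).1 ∈ Finset.Ico s (s + ℓ) := by
    intro ij hij
    have e2 := hg2 ij hij
    have e3 := hg3 ij hij
    have e4 := hgab ij hij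
    simp only [Finset.mem_Ico]
    omega
  have hcard := Finset.card_eq_sum_card_fiberwise hmapsto
  set fib := fun x => F.filter (fun ij => (g ij).1 = x) with hfib
  -- each fiber has at most two elements: at most one per governing order
  have hfibkey : ∀ x, ∀ u ∈ fib x, ∀ v ∈ fib x,
      (UseOrd (· < ·) w u.1 u.2 ↔ UseOrd (· < ·) w v.1 v.2) → u = v := by
    intro x u hu v hv huse
    rw [hfib, Finset.mem_filter] at hu hv
    have h1 := hg1 u hu.1
    have h2 := hg1 v hv.1
    rw [hu.2] at h1
    rw [hv.2] at h2
    have := lroot_same_start h1 h2 huse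
    exact Prod.ext this.1 this.2
  have hfib2 : ∀ x, (fib x).card ≤ 2 := by
    intro x
    have : (fib x).card ≤ (Finset.univ : Finset Bool).card := by
      apply Finset.card_le_card_of_injOn
        (fun ij => if UseOrd (· < ·) w ij.1 ij.2 then true else false)
        (fun a _ => Finset.mem_univ _)
      intro u hu v hv heq
      simp only [Finset.mem_coe] at hu hv
      apply hfibkey x u hu v hv
      by_cases e1 : UseOrd (· < ·) w u.1 u.2 <;> by_cases e2 : UseOrd (· < ·) w v.1 v.2 <;>
        simp [e1, e2] at heq ⊢
    simpa using this
  set C := (Finset.Ico s (s + ℓ)).filter (fun x => 2 ≤ (fib x).card) with hC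
  have hsum : F.card ≤ ℓ + C.card := by
    rw [hcard, hC]
    calc ∑ x ∈ Finset.Ico s (s + ℓ), (fib x).card
        ≤ ∑ x ∈ Finset.Ico s (s + ℓ), (1 + if 2 ≤ (fib x).card then 1 else 0) := by
          apply Finset.sum_le_sum
          intro x hx
          by_cases h : 2 ≤ (fib x).card
          · rw [if_pos h]; exact hfib2 x
          · rw [if_neg h]; omega
      _ = ℓ + ((Finset.Ico s (s + ℓ)).filter (fun x => 2 ≤ (fib x).card)).card := by
          rw [Finset.sum_add_distrib, Finset.sum_const, Nat.card_Ico, Finset.card_filter]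
          simp
  have hCprop : ∀ x ∈ C, (w[x]? = w[x+1]? ∧ (0 < x → w[x-1]? ≠ w[x]?)) ∧ x + 2 ≤ s + ℓ := by
    intro x hx
    rw [hC, Finset.mem_filter] at hx
    obtain ⟨hxI, hx2⟩ := hx
    obtain ⟨u, hu, v, hv, huv⟩ := Finset.one_lt_card.mp (show 1 < (fib x).card by omega)
    have hu' := (Finset.mem_filter.mp hu)
    have hv' := (Finset.mem_filter.mp hv)
    have h1 := hg1 u hu'.1
    have h2 := hg1 v hv'.1
    rw [hu'.2] at h1
    rw [hv'.2] at h2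
    have hne : ¬ (u.1 = v.1 ∧ u.2 = v.2) := fun h => huv (Prod.ext h.1 h.2)
    obtain ⟨-, e1, e2⟩ := coll_struct h1 h2 hne
    refine ⟨⟨e1, e2⟩, ?_⟩
    have hbne : (g u).2 ≠ (g v).2 := by
      intro e
      rw [e] at h1
      exact hne (lroot_interval_inj h1 h2)
    have hb1 := hg3 u hu'.1
    have hb2 := hg3 v hv'.1
    have hb3 := hgab u hu'.1
    have hb4 := hgab v hv'.1
    rw [hu'.2] at hb3
    rw [hv'.2] at hb4
    omega
  have hCadj : ∀ x ∈ C, x + 1 ∉ C := by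
    intro x hx hx1
    obtain ⟨⟨e1, -⟩, -⟩ := hCprop x hx
    obtain ⟨⟨-, e3⟩, -⟩ := hCprop (x+1) hx1
    refine e3 (by omega) ?_
    rw [show x + 1 - 1 = x from by omega]
    exact e1
  have hCcard : C.card ≤ ℓ / 2 := by
    have : C.card ≤ (Finset.range (ℓ / 2)).card := by
      apply Finset.card_le_card_of_injOn (fun x => (x - s) / 2)
      · intro x hx
        have h2 := (hCprop x hx).2
        have hxI := (Finset.mem_filter.mp (hC ▸ hx)).1
        rw [Finset.mem_Ico] at hxI
        simp only [Finset.mem_coe, Finset.mem_range]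
        omega
      · intro x hx y hy hxy
        simp only [Finset.mem_coe] at hx hy
        have hxI := (Finset.mem_filter.mp (hC ▸ hx)).1
        have hyI := (Finset.mem_filter.mp (hC ▸ hy)).1
        rw [Finset.mem_Ico] at hxI hyI
        simp only at hxy
        rcases lt_trichotomy x y with h | h | h
        · exfalso
          have : y = x + 1 := by omega
          exact hCadj x hx (this ▸ hy)
        · exact h
        · exfalso
          have : x = y + 1 := by omega
          exact hCadj y hy (this ▸ hx)
    simpa using this
  omega
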